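/- Let G_{‖v₀} be a game on a finite graph with Boolean payoffs, x̄ a payoff vector, and Corr a correctness condition on plays. Prover has a winning strategy in the deviator game Dev_{x̄,Corr} G_{‖v₀} if and only if there exists a strong secure equilibrium σ̄ in G_{‖v₀} with μ(⟨σ̄⟩) = x̄ and ⟨σ̄⟩ ⊨ Corr. -/

import Mathlib

namespace Stmt6

noncomputable section
open Classical

structure Arena (ι V : Type*) where
  owner : V → ι
  E : V → V → Prop
  nosink : ∀ v, ∃ w, E v w

def Strat {ι V : Type*} (G : Arena ι V) :=
  {f : List V → V → V // ∀ h v, G.E v (f h v)}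

def histFun {ι V : Type*} (G : Arena ι V) (σ : ι → Strat G) (v0 : V) :
    ℕ → List V × V
  | 0 => ([], v0)
  | n + 1 =>
    let p := histFun G σ v0 n
    (p.1 ++ [p.2], (σ (G.owner p.2)).1 p.1 p.2)

def play {ι V : Type*} (G : Arena ι V) (σ : ι → Strat G) (v0 : V) : ℕ → V :=
  fun n => (histFun G σ v0 n).2

def combine {ι V : Type*} {G : Arena ι V} (C : Set ι) (σ σ' : ι → Strat G) :
    ι → Strat G :=
  fun i => if i ∈ C then σ' i else σ i

def HarmfulDev {ι V : Type*} (G : Arena ι V) (μ : ι → (ℕ → V) → ℝ)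
    (v0 : V) (σ : ι → Strat G) (C : Set ι) (σ' : ι → Strat G) : Prop :=
  (∀ i ∈ C, μ i (play G σ v0) ≤ μ i (play G (combine C σ σ') v0)) ∧
  (∃ j, j ∉ C ∧ μ j (play G (combine C σ σ') v0) < μ j (play G σ v0))

def IsSSE {ι V : Type*} (G : Arena ι V) (μ : ι → (ℕ → V) → ℝ)
    (v0 : V) (σ : ι → Strat G) : Prop :=
  ¬ ∃ (C : Set ι) (σ' : ι → Strat G), HarmfulDev G μ v0 σ C σ'

/-- Prover vertices of the deviator game: a game vertex together with the current
set of deviators. -/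
abbrev PV (ι V : Type*) := V × Set ι

/-- A Prover strategy proposes a successor vertex; it is valid if its proposals
follow edges of the game. The history records past positions and proposals. -/
def PStratValid {ι V : Type*} (G : Arena ι V)
    (sP : List (PV ι V × V) → PV ι V → V) : Prop :=
  ∀ h x, G.E x.1 (sP h x)

/-- A Challenger strategy either accepts Prover's proposal, or deviates to another
successor, adding the owner of the current vertex to the set of deviators. -/
def CStratValid {ι V : Type*} (G : Arena ι V)
    (sC : List (PV ι V × V) → PV ι V → V → PV ι V) : Prop :=
  ∀ h x p, sC h x p = (p, x.2) ∨
    ∃ w, w ≠ p ∧ G.E x.1 w ∧ sC h x p = (w, x.2 ∪ {G.owner x.1})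

/-- History and current position of the deviator game after `n` rounds. -/
def devAux {ι V : Type*} (G : Arena ι V)
    (sP : List (PV ι V × V) → PV ι V → V)
    (sC : List (PV ι V × V) → PV ι V → V → PV ι V)
    (init : PV ι V) : ℕ → List (PV ι V × V) × PV ι V
  | 0 => ([], init)
  | n + 1 =>
    let p := devAux G sP sC init n
    (p.1 ++ [(p.2, sP p.1 p.2)], sC p.1 p.2 (sP p.1 p.2))

def devPos {ι V : Type*} (G : Arena ι V)
    (sP : List (PV ι V × V) → PV ι V → V)
    (sC : List (PV ι V × V) → PV ι V → V → PV ι V)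
    (init : PV ι V) (n : ℕ) : PV ι V :=
  (devAux G sP sC init n).2

/-- Challenger wins a play of the deviator game (given by its sequence of
Prover positions) iff either no one deviated and the produced play does not have
payoff `x̄` or does not satisfy `Corr`, or someone deviated, every deviator gets at
least their payoff in `x̄`, and some non-deviator gets strictly less. -/
def ChallengerWins {ι V : Type*} (μ : ι → (ℕ → V) → ℝ) (xbar : ι → ℝ)
    (Corr : Set (ℕ → V)) (pos : ℕ → PV ι V) : Prop :=
  ((∀ n, (pos n).2 = ∅) ∧
    ((∃ i, μ i (fun n => (pos n).1) ≠ xbar i) ∨ (fun n => (pos n).1) ∉ Corr)) ∨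
  ((∃ n, (pos n).2 ≠ ∅) ∧
    (∀ i, (∃ n, i ∈ (pos n).2) → xbar i ≤ μ i (fun n => (pos n).1)) ∧
    (∃ j, ¬ (∃ n, j ∈ (pos n).2) ∧ μ j (fun n => (pos n).1) < xbar j))

/-- Prover has a winning strategy in the deviator game from `init`. -/
def ProverWins {ι V : Type*} (G : Arena ι V) (μ : ι → (ℕ → V) → ℝ)
    (xbar : ι → ℝ) (Corr : Set (ℕ → V)) (init : PV ι V) : Prop :=
  ∃ sP, PStratValid G sP ∧ ∀ sC, CStratValid G sC →
    ¬ ChallengerWins μ xbar Corr (devPos G sP sC init)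


section Aux

variable {ι V : Type*} (G : Arena ι V)

lemma histFun_fst (σ : ι → Strat G) (v0 : V) (n : ℕ) :
    (histFun G σ v0 n).1 = (List.range n).map (play G σ v0) := by
  induction n with
  | zero => rfl
  | succ n ih =>
    show (histFun G σ v0 n).1 ++ [(histFun G σ v0 n).2] = _
    rw [List.range_succ, List.map_append, ih]
    rfl

lemma play_zero (σ : ι → Strat G) (v0 : V) : play G σ v0 0 = v0 := rfl

lemma play_succ (σ : ι → Strat G) (v0 : V) (n : ℕ) :
    play G σ v0 (n + 1) =
      (σ (G.owner (play G σ v0 n))).1 ((List.range n).map (play G σ v0))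
        (play G σ v0 n) := by
  show (σ (G.owner (histFun G σ v0 n).2)).1 (histFun G σ v0 n).1 (histFun G σ v0 n).2 = _
  rw [histFun_fst]
  rfl

lemma play_edge (σ : ι → Strat G) (v0 : V) (n : ℕ) :
    G.E (play G σ v0 n) (play G σ v0 (n + 1)) := by
  rw [play_succ]; exact (σ _).2 _ _

lemma devAux_succ (sP : List (PV ι V × V) → PV ι V → V)
    (sC : List (PV ι V × V) → PV ι V → V → PV ι V) (init : PV ι V) (n : ℕ) :
    devAux G sP sC init (n + 1) =
      ((devAux G sP sC init n).1 ++
        [((devAux G sP sC init n).2,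
          sP (devAux G sP sC init n).1 (devAux G sP sC init n).2)],
       sC (devAux G sP sC init n).1 (devAux G sP sC init n).2
          (sP (devAux G sP sC init n).1 (devAux G sP sC init n).2)) := rfl

/-- Reconstruction of a deviator-game history from a game history: Challenger
accepts exactly when the next actual vertex agrees with Prover's proposal. -/
def recon (sP : List (PV ι V × V) → PV ι V → V) (h : List V) (v : V) :
    List (PV ι V × V) × Set ι :=
  if hne : h = [] then ([], ∅)
  else
    let u := h.getLast hne
    let pr := recon sP h.dropLast u
    let p := sP pr.1 (u, pr.2)
    (pr.1 ++ [((u, pr.2), p)], if v = p then pr.2 else pr.2 ∪ {G.owner u})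
termination_by h.length
decreasing_by
  have : h.length ≠ 0 := by simpa using hne
  simp [List.length_dropLast]; omega

lemma recon_nil (sP : List (PV ι V × V) → PV ι V → V) (v : V) :
    recon G sP [] v = ([], ∅) := by
  rw [recon]
  simp

lemma recon_concat (sP : List (PV ι V × V) → PV ι V → V) (h : List V) (u v : V) :
    recon G sP (h ++ [u]) v =
      ((recon G sP h u).1 ++
        [((u, (recon G sP h u).2), sP (recon G sP h u).1 (u, (recon G sP h u).2))],
       if v = sP (recon G sP h u).1 (u, (recon G sP h u).2) then (recon G sP h u).2
       else (recon G sP h u).2 ∪ {G.owner u}) := by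
  rw [recon]
  have hne : h ++ [u] ≠ [] := by simp
  rw [dif_neg hne]
  simp [List.getLast_append, List.dropLast_concat]

lemma recon_proj (sP : List (PV ι V × V) → PV ι V → V) (h : List V) :
    ∀ v, ((recon G sP h v).1).map (fun q => q.1.1) = h := by
  induction h using List.reverseRecOn with
  | nil => intro v; rw [recon_nil]; rfl
  | append_singleton h u ih =>
    intro v
    rw [recon_concat]
    simp [ih u]

end Aux


section Backward

variable {ι V : Type*}

/-- Prover strategy induced by a strategy profile: propose the profile's move at
the projected history. -/
def sPof (G : Arena ι V) (σ : ι → Strat G) : List (PV ι V × V) → PV ι V → V :=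
  fun h x => (σ (G.owner x.1)).1 (h.map fun q => q.1.1) x.1

lemma sPof_valid (G : Arena ι V) (σ : ι → Strat G) : PStratValid G (sPof G σ) :=
  fun _ x => (σ (G.owner x.1)).2 _ x.1

variable (G : Arena ι V) (σ : ι → Strat G) (v0 : V)
  (sC : List (PV ι V × V) → PV ι V → V → PV ι V)

def bA : ℕ → List (PV ι V × V) × PV ι V := devAux G (sPof G σ) sC (v0, ∅)

def bπ (n : ℕ) : V := (bA G σ v0 sC n).2.1

def bD (n : ℕ) : Set ι := (bA G σ v0 sC n).2.2

def bC : Set ι := {i | ∃ n, i ∈ bD G σ v0 sC n}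

lemma bA_succ (n : ℕ) : bA G σ v0 sC (n + 1) =
    ((bA G σ v0 sC n).1 ++
      [((bA G σ v0 sC n).2, sPof G σ (bA G σ v0 sC n).1 (bA G σ v0 sC n).2)],
     sC (bA G σ v0 sC n).1 (bA G σ v0 sC n).2
        (sPof G σ (bA G σ v0 sC n).1 (bA G σ v0 sC n).2)) := rfl

lemma bstep (hsCv : CStratValid G sC) (n : ℕ) :
    (bA G σ v0 sC (n + 1)).2 = (sPof G σ (bA G σ v0 sC n).1 (bA G σ v0 sC n).2, bD G σ v0 sC n) ∨
    ∃ w, w ≠ sPof G σ (bA G σ v0 sC n).1 (bA G σ v0 sC n).2 ∧ G.E (bπ G σ v0 sC n) w ∧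
      (bA G σ v0 sC (n + 1)).2 = (w, bD G σ v0 sC n ∪ {G.owner (bπ G σ v0 sC n)}) := by
  have h := hsCv (bA G σ v0 sC n).1 (bA G σ v0 sC n).2
    (sPof G σ (bA G σ v0 sC n).1 (bA G σ v0 sC n).2)
  rw [bA_succ]
  exact h

lemma bπ_edge (hsCv : CStratValid G sC) (n : ℕ) :
    G.E (bπ G σ v0 sC n) (bπ G σ v0 sC (n + 1)) := by
  rcases bstep G σ v0 sC hsCv n with h | ⟨w, _, hE, h⟩
  · have h1 : bπ G σ v0 sC (n + 1) = sPof G σ (bA G σ v0 sC n).1 (bA G σ v0 sC n).2 :=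
      congrArg Prod.fst h
    rw [h1]
    exact sPof_valid G σ (bA G σ v0 sC n).1 (bA G σ v0 sC n).2
  · rw [show bπ G σ v0 sC (n + 1) = w from congrArg Prod.fst h]
    exact hE

lemma bA_proj (n : ℕ) :
    ((bA G σ v0 sC n).1).map (fun q => q.1.1) = (List.range n).map (bπ G σ v0 sC) := by
  induction n with
  | zero => rfl
  | succ n ih =>
    rw [bA_succ, List.map_append, ih, List.range_succ, List.map_append]
    rfl

/-- The deviating profile read off from Challenger's behaviour: follow the
projected play of the deviator game whenever the history matches it. -/
def bσ' (hsCv : CStratValid G sC) : ι → Strat G := fun i =>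
  ⟨fun h v =>
    if h = (List.range h.length).map (bπ G σ v0 sC) ∧ v = bπ G σ v0 sC h.length
    then bπ G σ v0 sC (h.length + 1) else (σ i).1 h v,
   by
    intro h v
    dsimp only
    by_cases hc : h = (List.range h.length).map (bπ G σ v0 sC) ∧ v = bπ G σ v0 sC h.length
    · rw [if_pos hc, hc.2]
      exact bπ_edge G σ v0 sC hsCv h.length
    · rw [if_neg hc]
      exact (σ i).2 h v⟩

lemma bσ'_apply (hsCv : CStratValid G sC) (i : ι) (h : List V) (v : V) :
    (bσ' G σ v0 sC hsCv i).1 h v =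
      if h = (List.range h.length).map (bπ G σ v0 sC) ∧ v = bπ G σ v0 sC h.length
      then bπ G σ v0 sC (h.length + 1) else (σ i).1 h v := rfl

lemma bhist (hsCv : CStratValid G sC) (n : ℕ) :
    histFun G (combine (bC G σ v0 sC) σ (bσ' G σ v0 sC hsCv)) v0 n =
      ((List.range n).map (bπ G σ v0 sC), bπ G σ v0 sC n) := by
  induction n with
  | zero => simp only [List.range_zero, List.map_nil]; rfl
  | succ n ih =>
    show ((histFun G _ v0 n).1 ++ [(histFun G _ v0 n).2],
        (combine (bC G σ v0 sC) σ (bσ' G σ v0 sC hsCv) (G.owner (histFun G _ v0 n).2)).1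
          (histFun G _ v0 n).1 (histFun G _ v0 n).2) = _
    rw [ih]
    refine Prod.ext ?_ ?_
    · show (List.range n).map (bπ G σ v0 sC) ++ [bπ G σ v0 sC n] = _
      rw [List.range_succ, List.map_append]
      rfl
    · show (combine (bC G σ v0 sC) σ (bσ' G σ v0 sC hsCv) (G.owner (bπ G σ v0 sC n))).1
        ((List.range n).map (bπ G σ v0 sC)) (bπ G σ v0 sC n) = bπ G σ v0 sC (n + 1)
      by_cases hiC : G.owner (bπ G σ v0 sC n) ∈ bC G σ v0 sC
      · rw [show combine (bC G σ v0 sC) σ (bσ' G σ v0 sC hsCv) (G.owner (bπ G σ v0 sC n)) =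
            bσ' G σ v0 sC hsCv (G.owner (bπ G σ v0 sC n)) from by simp [combine, hiC]]
        rw [bσ'_apply]
        rw [if_pos ⟨by simp, by simp⟩]
        simp
      · rw [show combine (bC G σ v0 sC) σ (bσ' G σ v0 sC hsCv) (G.owner (bπ G σ v0 sC n)) =
            σ (G.owner (bπ G σ v0 sC n)) from by simp [combine, hiC]]
        rcases bstep G σ v0 sC hsCv n with h | ⟨w, _, _, h⟩
        · have h1 : bπ G σ v0 sC (n + 1) =
              sPof G σ (bA G σ v0 sC n).1 (bA G σ v0 sC n).2 := congrArg Prod.fst h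
          rw [h1]
          show _ = (σ (G.owner (bA G σ v0 sC n).2.1)).1
            (((bA G σ v0 sC n).1).map fun q => q.1.1) (bA G σ v0 sC n).2.1
          rw [bA_proj]
          rfl
        · exfalso
          apply hiC
          refine ⟨n + 1, ?_⟩
          show G.owner (bπ G σ v0 sC n) ∈ (bA G σ v0 sC (n + 1)).2.2
          rw [h]
          exact Set.mem_union_right _ rfl

lemma bplay (hsCv : CStratValid G sC) :
    play G (combine (bC G σ v0 sC) σ (bσ' G σ v0 sC hsCv)) v0 = bπ G σ v0 sC :=
  funext fun n => congrArg Prod.snd (bhist G σ v0 sC hsCv n)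

lemma backward (μ : ι → (ℕ → V) → ℝ) (xbar : ι → ℝ) (Corr : Set (ℕ → V))
    (hSSE : IsSSE G μ v0 σ) (hx : ∀ i, μ i (play G σ v0) = xbar i)
    (hCorr : play G σ v0 ∈ Corr) :
    ProverWins G μ xbar Corr (v0, (∅ : Set ι)) := by
  refine ⟨sPof G σ, sPof_valid G σ, fun sC hsCv hCW => ?_⟩
  have hposeq : (fun n => (devPos G (sPof G σ) sC (v0, (∅ : Set ι)) n).1) = bπ G σ v0 sC := rfl
  rcases hCW with ⟨hD, hbad⟩ | ⟨⟨n0, hn0⟩, hge, j, hjD, hjlt⟩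
  · have hCempty : bC G σ v0 sC = ∅ := by
      refine Set.eq_empty_iff_forall_notMem.2 fun i hi => ?_
      rcases hi with ⟨n, hi⟩
      have h2 : bD G σ v0 sC n = ∅ := hD n
      rw [h2] at hi
      exact hi
    have hτ : combine (bC G σ v0 sC) σ (bσ' G σ v0 sC hsCv) = σ := by
      funext i
      have hni : i ∉ bC G σ v0 sC := by rw [hCempty]; exact fun h => h
      simp [combine, hni]
    have hπσ : bπ G σ v0 sC = play G σ v0 := by
      have h3 := bplay G σ v0 sC hsCv
      rw [hτ] at h3
      exact h3.symm
    rw [hposeq, hπσ] at hbad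
    rcases hbad with ⟨i, hi⟩ | h
    · exact hi (hx i)
    · exact h hCorr
  · rw [hposeq] at hge hjlt
    apply hSSE
    refine ⟨bC G σ v0 sC, bσ' G σ v0 sC hsCv, fun i hiC => ?_, j, ?_, ?_⟩
    · rw [bplay G σ v0 sC hsCv, hx i]
      exact hge i hiC
    · exact hjD
    · rw [bplay G σ v0 sC hsCv, hx j]
      exact hjlt

end Backward


section Forward

variable {ι V : Type*}

/-- The profile extracted from a Prover strategy, via history reconstruction. -/
def σof (G : Arena ι V) (sP : List (PV ι V × V) → PV ι V → V)
    (hsPv : PStratValid G sP) : ι → Strat G := fun _ =>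
  ⟨fun h v => sP (recon G sP h v).1 (v, (recon G sP h v).2),
   fun h v => hsPv (recon G sP h v).1 (v, (recon G sP h v).2)⟩

/-- The always-accepting Challenger strategy. -/
def sCacc : List (PV ι V × V) → PV ι V → V → PV ι V := fun _ x p => (p, x.2)

lemma sCacc_valid (G : Arena ι V) : CStratValid G (sCacc (ι := ι) (V := V)) :=
  fun _ _ _ => Or.inl rfl

lemma fP (G : Arena ι V) (sP : List (PV ι V × V) → PV ι V → V)
    (hsPv : PStratValid G sP) (v0 : V) (n : ℕ) :
    (devAux G sP sCacc (v0, ∅) n).2 = (play G (σof G sP hsPv) v0 n, ∅) ∧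
    recon G sP ((List.range n).map (play G (σof G sP hsPv) v0))
        (play G (σof G sP hsPv) v0 n) =
      ((devAux G sP sCacc (v0, ∅) n).1, ∅) := by
  induction n with
  | zero =>
    refine ⟨rfl, ?_⟩
    simp only [List.range_zero, List.map_nil]
    exact recon_nil G sP v0
  | succ n ih =>
    obtain ⟨ih1, ih2⟩ := ih
    have hplay : play G (σof G sP hsPv) v0 (n + 1) =
        sP (devAux G sP sCacc (v0, ∅) n).1 (play G (σof G sP hsPv) v0 n, ∅) := by
      rw [play_succ]
      show sP (recon G sP ((List.range n).map (play G (σof G sP hsPv) v0))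
          (play G (σof G sP hsPv) v0 n)).1
        (play G (σof G sP hsPv) v0 n,
          (recon G sP ((List.range n).map (play G (σof G sP hsPv) v0))
            (play G (σof G sP hsPv) v0 n)).2) = _
      rw [ih2]
    constructor
    · show sCacc (devAux G sP sCacc (v0, ∅) n).1 (devAux G sP sCacc (v0, ∅) n).2
        (sP (devAux G sP sCacc (v0, ∅) n).1 (devAux G sP sCacc (v0, ∅) n).2) = _
      rw [ih1]
      show (sP (devAux G sP sCacc (v0, ∅) n).1 (play G (σof G sP hsPv) v0 n, ∅), ∅) = _
      rw [← hplay]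
    · rw [List.range_succ, List.map_append]
      show recon G sP ((List.range n).map (play G (σof G sP hsPv) v0) ++
          [play G (σof G sP hsPv) v0 n]) (play G (σof G sP hsPv) v0 (n + 1)) = _
      rw [recon_concat, ih2]
      dsimp only
      rw [if_pos hplay]
      show ((devAux G sP sCacc (v0, ∅) n).1 ++
          [((play G (σof G sP hsPv) v0 n, ∅),
            sP (devAux G sP sCacc (v0, ∅) n).1 (play G (σof G sP hsPv) v0 n, ∅))], ∅) = _
      rw [devAux_succ, ← hplay, ih1]
      rw [hplay]

/-- The Challenger strategy following a given profile's play. -/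
def sC' (G : Arena ι V) (v0 : V) (τ : ι → Strat G) :
    List (PV ι V × V) → PV ι V → V → PV ι V := fun h x p =>
  if h.map (fun q => q.1.1) = (List.range h.length).map (play G τ v0) ∧
      x.1 = play G τ v0 h.length ∧ play G τ v0 (h.length + 1) ≠ p
  then (play G τ v0 (h.length + 1), x.2 ∪ {G.owner x.1}) else (p, x.2)

lemma sC'_valid (G : Arena ι V) (v0 : V) (τ : ι → Strat G) :
    CStratValid G (sC' G v0 τ) := by
  intro h x p
  dsimp only [sC']
  by_cases hc : h.map (fun q => q.1.1) = (List.range h.length).map (play G τ v0) ∧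
      x.1 = play G τ v0 h.length ∧ play G τ v0 (h.length + 1) ≠ p
  · rw [if_pos hc]
    right
    exact ⟨play G τ v0 (h.length + 1), hc.2.2,
      by rw [hc.2.1]; exact play_edge G τ v0 h.length, rfl⟩
  · rw [if_neg hc]
    left
    rfl

def fB (G : Arena ι V) (sP : List (PV ι V × V) → PV ι V → V) (v0 : V)
    (τ : ι → Strat G) : ℕ → List (PV ι V × V) × PV ι V :=
  devAux G sP (sC' G v0 τ) (v0, ∅)

lemma fB_succ (G : Arena ι V) (sP : List (PV ι V × V) → PV ι V → V) (v0 : V)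
    (τ : ι → Strat G) (n : ℕ) :
    fB G sP v0 τ (n + 1) =
      ((fB G sP v0 τ n).1 ++
        [((fB G sP v0 τ n).2, sP (fB G sP v0 τ n).1 (fB G sP v0 τ n).2)],
       sC' G v0 τ (fB G sP v0 τ n).1 (fB G sP v0 τ n).2
         (sP (fB G sP v0 τ n).1 (fB G sP v0 τ n).2)) := rfl

lemma fQ (G : Arena ι V) (sP : List (PV ι V × V) → PV ι V → V) (v0 : V)
    (τ : ι → Strat G) (C : Set ι)
    (hkey : ∀ n, G.owner (play G τ v0 n) ∉ C →
      play G τ v0 (n + 1) =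
        sP (recon G sP ((List.range n).map (play G τ v0)) (play G τ v0 n)).1
          (play G τ v0 n,
            (recon G sP ((List.range n).map (play G τ v0)) (play G τ v0 n)).2))
    (n : ℕ) :
    (fB G sP v0 τ n).2.1 = play G τ v0 n ∧ (fB G sP v0 τ n).2.2 ⊆ C ∧
    recon G sP ((List.range n).map (play G τ v0)) (play G τ v0 n) =
      ((fB G sP v0 τ n).1, (fB G sP v0 τ n).2.2) := by
  induction n with
  | zero =>
    refine ⟨rfl, Set.empty_subset C, ?_⟩
    simp only [List.range_zero, List.map_nil]
    exact recon_nil G sP v0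
  | succ n ih =>
    obtain ⟨ih1, ih2, ih3⟩ := ih
    have hproj : ((fB G sP v0 τ n).1).map (fun q => q.1.1) =
        (List.range n).map (play G τ v0) := by
      have h4 := congrArg (fun z : List (PV ι V × V) × Set ι =>
        (z.1).map (fun q : PV ι V × V => q.1.1)) ih3
      dsimp only at h4
      rw [recon_proj] at h4
      exact h4.symm
    have hlen : (fB G sP v0 τ n).1.length = n := by
      have h5 := congrArg List.length hproj
      simpa using h5
    have hB2 : (fB G sP v0 τ n).2 = (play G τ v0 n, (fB G sP v0 τ n).2.2) := by
      rw [← ih1]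
    by_cases heq : play G τ v0 (n + 1) =
        sP (fB G sP v0 τ n).1 (fB G sP v0 τ n).2
    · -- Challenger accepts
      have hcond : ¬ (((fB G sP v0 τ n).1).map (fun q => q.1.1) =
          (List.range (fB G sP v0 τ n).1.length).map (play G τ v0) ∧
          (fB G sP v0 τ n).2.1 = play G τ v0 (fB G sP v0 τ n).1.length ∧
          play G τ v0 ((fB G sP v0 τ n).1.length + 1) ≠
            sP (fB G sP v0 τ n).1 (fB G sP v0 τ n).2) := by
        intro hc
        exact hc.2.2 (by rw [hlen]; exact heq)
      have hstep2 : fB G sP v0 τ (n + 1) =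
          ((fB G sP v0 τ n).1 ++
            [((fB G sP v0 τ n).2, sP (fB G sP v0 τ n).1 (fB G sP v0 τ n).2)],
           (sP (fB G sP v0 τ n).1 (fB G sP v0 τ n).2, (fB G sP v0 τ n).2.2)) := by
        rw [fB_succ]
        congr 1
        dsimp only [sC']
        rw [if_neg hcond]
      refine ⟨?_, ?_, ?_⟩
      · rw [hstep2]
        exact heq.symm
      · rw [hstep2]
        exact ih2
      · rw [List.range_succ, List.map_append]
        show recon G sP ((List.range n).map (play G τ v0) ++ [play G τ v0 n])
          (play G τ v0 (n + 1)) = _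
        rw [recon_concat, ih3]
        dsimp only
        rw [← hB2, hstep2]
        rw [if_pos heq]
    · -- Challenger deviates
      have howner : G.owner (play G τ v0 n) ∈ C := by
        by_contra hnotin
        apply heq
        rw [hkey n hnotin, ih3]
        dsimp only
        rw [← hB2]
      have hcond : ((fB G sP v0 τ n).1).map (fun q => q.1.1) =
          (List.range (fB G sP v0 τ n).1.length).map (play G τ v0) ∧
          (fB G sP v0 τ n).2.1 = play G τ v0 (fB G sP v0 τ n).1.length ∧
          play G τ v0 ((fB G sP v0 τ n).1.length + 1) ≠
            sP (fB G sP v0 τ n).1 (fB G sP v0 τ n).2 :=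
        ⟨by rw [hlen]; exact hproj, by rw [hlen]; exact ih1, by rw [hlen]; exact heq⟩
      have hstep2 : fB G sP v0 τ (n + 1) =
          ((fB G sP v0 τ n).1 ++
            [((fB G sP v0 τ n).2, sP (fB G sP v0 τ n).1 (fB G sP v0 τ n).2)],
           (play G τ v0 (n + 1),
            (fB G sP v0 τ n).2.2 ∪ {G.owner (fB G sP v0 τ n).2.1})) := by
        rw [fB_succ]
        congr 1
        dsimp only [sC']
        rw [if_pos hcond, hlen]
      refine ⟨?_, ?_, ?_⟩
      · rw [hstep2]
      · rw [hstep2]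
        refine Set.union_subset ih2 (Set.singleton_subset_iff.mpr ?_)
        rw [ih1]
        exact howner
      · rw [List.range_succ, List.map_append]
        show recon G sP ((List.range n).map (play G τ v0) ++ [play G τ v0 n])
          (play G τ v0 (n + 1)) = _
        rw [recon_concat, ih3]
        dsimp only
        rw [← hB2, hstep2]
        rw [if_neg heq, ih1]

lemma fwd_payoff (G : Arena ι V) (sP : List (PV ι V × V) → PV ι V → V)
    (hsPv : PStratValid G sP) (v0 : V) (μ : ι → (ℕ → V) → ℝ) (xbar : ι → ℝ)
    (Corr : Set (ℕ → V))
    (hwin : ∀ sC, CStratValid G sC →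
      ¬ ChallengerWins μ xbar Corr (devPos G sP sC (v0, (∅ : Set ι)))) :
    (∀ i, μ i (play G (σof G sP hsPv) v0) = xbar i) ∧
      play G (σof G sP hsPv) v0 ∈ Corr := by
  have h := hwin sCacc (sCacc_valid G)
  have hD : ∀ n, (devPos G sP sCacc (v0, (∅ : Set ι)) n).2 = ∅ :=
    fun n => congrArg Prod.snd (fP G sP hsPv v0 n).1
  have hf : (fun n => (devPos G sP sCacc (v0, (∅ : Set ι)) n).1) =
      play G (σof G sP hsPv) v0 :=
    funext fun n => congrArg Prod.fst (fP G sP hsPv v0 n).1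
  by_contra hcon
  apply h
  left
  refine ⟨hD, ?_⟩
  rw [hf]
  rcases not_and_or.mp hcon with h1 | h2
  · left
    push_neg at h1
    exact h1
  · right
    exact h2

lemma fwd_sse (G : Arena ι V) (sP : List (PV ι V × V) → PV ι V → V)
    (hsPv : PStratValid G sP) (v0 : V)
    (μ : ι → (ℕ → V) → ℝ) (xbar : ι → ℝ) (Corr : Set (ℕ → V))
    (hwin : ∀ sC, CStratValid G sC →
      ¬ ChallengerWins μ xbar Corr (devPos G sP sC (v0, (∅ : Set ι))))
    (hx : ∀ i, μ i (play G (σof G sP hsPv) v0) = xbar i) :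
    IsSSE G μ v0 (σof G sP hsPv) := by
  rintro ⟨C, σ'', hge, j, hjC, hjlt⟩
  set τ : ι → Strat G := combine C (σof G sP hsPv) σ'' with hτ
  have hkey : ∀ n, G.owner (play G τ v0 n) ∉ C →
      play G τ v0 (n + 1) =
        sP (recon G sP ((List.range n).map (play G τ v0)) (play G τ v0 n)).1
          (play G τ v0 n,
            (recon G sP ((List.range n).map (play G τ v0)) (play G τ v0 n)).2) := by
    intro n hn
    rw [play_succ]
    have hcomb : τ (G.owner (play G τ v0 n)) = σof G sP hsPv (G.owner (play G τ v0 n)) := by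
      rw [hτ]
      simp [combine, hn]
      exact fun h => absurd h hn
    rw [hcomb]
    rfl
  have hQ := fQ G sP v0 τ C hkey
  apply hwin (sC' G v0 τ) (sC'_valid G v0 τ)
  right
  have hf : (fun n => (devPos G sP (sC' G v0 τ) (v0, (∅ : Set ι)) n).1) = play G τ v0 :=
    funext fun n => (hQ n).1
  refine ⟨?_, ?_, j, ?_, ?_⟩
  · by_contra hall
    push_neg at hall
    have hππ : ∀ n, play G τ v0 n = play G (σof G sP hsPv) v0 n ∧
        (List.range n).map (play G τ v0) =
          (List.range n).map (play G (σof G sP hsPv) v0) := by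
      intro n
      induction n with
      | zero => exact ⟨rfl, rfl⟩
      | succ n ih =>
        obtain ⟨ih1', ih2'⟩ := ih
        obtain ⟨q1, q2, q3⟩ := hQ n
        have hproj : ((fB G sP v0 τ n).1).map (fun q => q.1.1) =
            (List.range n).map (play G τ v0) := by
          have h4 := congrArg (fun z : List (PV ι V × V) × Set ι =>
            (z.1).map (fun q : PV ι V × V => q.1.1)) q3
          dsimp only at h4
          rw [recon_proj] at h4
          exact h4.symm
        have hlen : (fB G sP v0 τ n).1.length = n := by
          have h5 := congrArg List.length hproj
          simpa using h5
        have hB2 : (fB G sP v0 τ n).2 = (play G τ v0 n, (fB G sP v0 τ n).2.2) := by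
          rw [← q1]
        have hD1 : (fB G sP v0 τ (n + 1)).2.2 = ∅ := hall (n + 1)
        have hcond : ¬ (((fB G sP v0 τ n).1).map (fun q => q.1.1) =
            (List.range (fB G sP v0 τ n).1.length).map (play G τ v0) ∧
            (fB G sP v0 τ n).2.1 = play G τ v0 (fB G sP v0 τ n).1.length ∧
            play G τ v0 ((fB G sP v0 τ n).1.length + 1) ≠
              sP (fB G sP v0 τ n).1 (fB G sP v0 τ n).2) := by
          intro hc
          have hstep3 : fB G sP v0 τ (n + 1) =
              ((fB G sP v0 τ n).1 ++
                [((fB G sP v0 τ n).2, sP (fB G sP v0 τ n).1 (fB G sP v0 τ n).2)],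
               (play G τ v0 ((fB G sP v0 τ n).1.length + 1),
                (fB G sP v0 τ n).2.2 ∪ {G.owner (fB G sP v0 τ n).2.1})) := by
            rw [fB_succ]
            congr 1
            dsimp only [sC']
            rw [if_pos hc]
          have hmem : G.owner (fB G sP v0 τ n).2.1 ∈ (fB G sP v0 τ (n + 1)).2.2 := by
            rw [hstep3]
            exact Set.mem_union_right _ rfl
          rw [hD1] at hmem
          exact hmem
        have haccept : fB G sP v0 τ (n + 1) =
            ((fB G sP v0 τ n).1 ++
              [((fB G sP v0 τ n).2, sP (fB G sP v0 τ n).1 (fB G sP v0 τ n).2)],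
             (sP (fB G sP v0 τ n).1 (fB G sP v0 τ n).2, (fB G sP v0 τ n).2.2)) := by
          rw [fB_succ]
          congr 1
          dsimp only [sC']
          rw [if_neg hcond]
        have hτs : play G τ v0 (n + 1) = sP (fB G sP v0 τ n).1 (fB G sP v0 τ n).2 := by
          have h6 := (hQ (n + 1)).1
          rw [haccept] at h6
          exact h6.symm
        have hσs : play G (σof G sP hsPv) v0 (n + 1) =
            sP (fB G sP v0 τ n).1 (fB G sP v0 τ n).2 := by
          rw [play_succ]
          show sP (recon G sP ((List.range n).map (play G (σof G sP hsPv) v0))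
              (play G (σof G sP hsPv) v0 n)).1
            (play G (σof G sP hsPv) v0 n,
              (recon G sP ((List.range n).map (play G (σof G sP hsPv) v0))
                (play G (σof G sP hsPv) v0 n)).2) = _
          rw [← ih2', ← ih1', q3]
          dsimp only
          rw [← hB2]
        refine ⟨hτs.trans hσs.symm, ?_⟩
        simp [List.range_succ, ih1', ih2']
    have hplays : play G τ v0 = play G (σof G sP hsPv) v0 := funext fun n => (hππ n).1
    rw [hplays] at hjlt
    exact lt_irrefl _ hjlt
  · intro i hi
    obtain ⟨n, hin⟩ := hi
    rw [hf, ← hx i]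
    exact hge i ((hQ n).2.1 hin)
  · rintro ⟨n, hn⟩
    exact hjC ((hQ n).2.1 hn)
  · rw [hf, ← hx j]
    exact hjlt


end Forward

/-- Prover wins the deviator game from `(v₀, ∅)` iff there is an SSE with payoff
vector `x̄` whose play satisfies the correctness condition. -/
theorem stmt6 (ι V : Type*) [Fintype V] (G : Arena ι V) (v0 : V)
    (μ : ι → (ℕ → V) → ℝ) (hbool : ∀ i π, μ i π = 0 ∨ μ i π = 1)
    (xbar : ι → ℝ) (Corr : Set (ℕ → V)) :
    ProverWins G μ xbar Corr (v0, (∅ : Set ι)) ↔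
      ∃ σ : ι → Strat G, IsSSE G μ v0 σ ∧
        (∀ i, μ i (play G σ v0) = xbar i) ∧ play G σ v0 ∈ Corr := by
  constructor
  · rintro ⟨sP, hsPv, hwin⟩
    obtain ⟨hx, hCorr⟩ := fwd_payoff G sP hsPv v0 μ xbar Corr hwin
    exact ⟨σof G sP hsPv, fwd_sse G sP hsPv v0 μ xbar Corr hwin hx, hx, hCorr⟩
  · rintro ⟨σ, hSSE, hx, hCorr⟩
    exact backward G σ v0 μ xbar Corr hSSE hx hCorr

end
end Stmt6
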